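/- Let K be a field, d : K → K a derivation, σ a finite index set, and S a set of multivariable polynomials in K[x_i : i ∈ σ]. Suppose a, b : σ → K are points such that f(a) = 0 and τf(a,b) = 0 for every f ∈ S. Then for every g in the ideal generated by S one also has g(a) = 0 and τg(a,b) = 0. -/

import Mathlib

open MvPolynomial

/-- Evaluation at `a` of the polynomial `f^d` obtained by applying `d : K → K`
to each coefficient of `f`. -/
noncomputable def evalCoeffD {K : Type*} [Field K] {σ : Type*} [Fintype σ]
    (d : K → K) (f : MvPolynomial σ K) (a : σ → K) : K :=
  ∑ m ∈ f.support, d (f.coeff m) * ∏ i, a i ^ m i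

/-- The prolongation `τf(a,b) = f^d(a) + Σ_i (∂f/∂x_i)(a) · b_i`. -/
noncomputable def tauProlong {K : Type*} [Field K] {σ : Type*} [Fintype σ]
    (d : K → K) (f : MvPolynomial σ K) (a b : σ → K) : K :=
  evalCoeffD d f a + ∑ i, (eval a (pderiv i f)) * b i

section Aux
variable {K : Type*} [Field K] {σ : Type*} [Fintype σ]
variable (d : K → K)

/-- The polynomial `f^d` obtained by applying `d` coefficientwise. -/
noncomputable def fdPoly (f : MvPolynomial σ K) : MvPolynomial σ K :=
  ∑ m ∈ f.support, monomial m (d (f.coeff m))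

variable (hadd : ∀ x y, d (x + y) = d x + d y)
    (hmul : ∀ x y, d (x * y) = x * d y + y * d x)

include hadd

lemma d_zero' : d 0 = 0 := by
  have := hadd 0 0; simpa using this

lemma coeff_fdPoly (f : MvPolynomial σ K) (n : σ →₀ ℕ) :
    (fdPoly d f).coeff n = d (f.coeff n) := by
  classical
  rw [fdPoly, MvPolynomial.coeff_sum]
  by_cases h : n ∈ f.support
  · rw [Finset.sum_eq_single n]
    · simp
    · intro m _ hmn; simp [coeff_monomial, hmn]
    · intro hn; exact absurd h hn
  · rw [Finset.sum_eq_zero]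
    · simp only [MvPolynomial.notMem_support_iff] at h
      rw [h, d_zero' d hadd]
    · intro m hm
      have hmn : m ≠ n := by rintro rfl; exact h hm
      simp [coeff_monomial, hmn]

lemma fdPoly_add (f g : MvPolynomial σ K) :
    fdPoly d (f + g) = fdPoly d f + fdPoly d g := by
  ext n
  simp [coeff_fdPoly d hadd, hadd]

include hmul in
lemma fdPoly_mul (f g : MvPolynomial σ K) :
    fdPoly d (f * g) = f * fdPoly d g + g * fdPoly d f := by
  classical
  ext n
  rw [coeff_add, coeff_fdPoly d hadd, coeff_mul, coeff_mul, coeff_mul]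
  have h1 : d (∑ p ∈ Finset.HasAntidiagonal.antidiagonal n, f.coeff p.1 * g.coeff p.2)
      = ∑ p ∈ Finset.HasAntidiagonal.antidiagonal n, d (f.coeff p.1 * g.coeff p.2) :=
    map_sum (AddMonoidHom.mk' d hadd) _ _
  rw [h1]
  simp only [hmul, coeff_fdPoly d hadd]
  rw [Finset.sum_add_distrib]
  congr 1
  conv_rhs => rw [← Finset.HasAntidiagonal.map_swap_antidiagonal, Finset.sum_map]
  rfl

omit hadd in
lemma evalCoeffD_eq_eval_fdPoly (f : MvPolynomial σ K) (a : σ → K) :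
    evalCoeffD d f a = eval a (fdPoly d f) := by
  rw [fdPoly, map_sum, evalCoeffD]
  refine Finset.sum_congr rfl fun m _ => ?_
  rw [eval_monomial]
  congr 1
  rw [Finsupp.prod_pow]

lemma tauProlong_add (f g : MvPolynomial σ K) (a b : σ → K) :
    tauProlong d (f + g) a b = tauProlong d f a b + tauProlong d g a b := by
  simp only [tauProlong, evalCoeffD_eq_eval_fdPoly, fdPoly_add d hadd, map_add,
    add_mul, Finset.sum_add_distrib]
  ring

include hmul in
lemma tauProlong_mul (f g : MvPolynomial σ K) (a b : σ → K) :
    tauProlong d (f * g) a b =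
      eval a f * tauProlong d g a b + eval a g * tauProlong d f a b := by
  simp only [tauProlong, evalCoeffD_eq_eval_fdPoly, fdPoly_mul d hadd hmul, map_add,
    map_mul, pderiv_mul, smul_eq_mul, add_mul]
  rw [Finset.sum_add_distrib, mul_add, mul_add, Finset.mul_sum, Finset.mul_sum]
  have e1 : ∑ x, eval a ((pderiv x) f) * eval a g * b x
      = ∑ i, eval a g * (eval a (pderiv i f) * b i) :=
    Finset.sum_congr rfl (fun i _ => by ring)
  have e2 : ∑ x, eval a f * eval a ((pderiv x) g) * b x
      = ∑ i, eval a f * (eval a (pderiv i g) * b i) :=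
    Finset.sum_congr rfl (fun i _ => by ring)
  rw [e1, e2]
  ring
end Aux

theorem tauProlong_vanish_ideal_span {K : Type*} [Field K] {σ : Type*} [Fintype σ]
    (d : K → K)
    (hadd : ∀ x y, d (x + y) = d x + d y)
    (hmul : ∀ x y, d (x * y) = x * d y + y * d x)
    (S : Set (MvPolynomial σ K)) (a b : σ → K)
    (hS : ∀ f ∈ S, eval a f = 0 ∧ tauProlong d f a b = 0) :
    ∀ g ∈ Ideal.span S, eval a g = 0 ∧ tauProlong d g a b = 0 := by
  intro g hg
  refine Submodule.span_induction (fun f hf => hS f hf) ?_ ?_ ?_ hg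
  · constructor
    · simp
    · simp [tauProlong, evalCoeffD]
  · intro x y _ _ hx hy
    refine ⟨by simp [hx.1, hy.1], ?_⟩
    rw [tauProlong_add d hadd, hx.2, hy.2, add_zero]
  · intro c x _ hx
    rw [smul_eq_mul]
    refine ⟨by simp [hx.1], ?_⟩
    rw [tauProlong_mul d hadd hmul, hx.1, hx.2]; simp
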